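/- For every integer n ≥ 1: ∑_{m=1}^{n} ((−1)^m · B_m / m!) · ∑_{(c₁,…,c_m)} ∏_{j=1}^{m} (1/c_j) = 1/(n+1), where the inner sum is over all compositions (c₁, …, c_m) of n of length m, and B_m is the m-th Bernoulli number with the convention B₁ = −1/2. -/

import Mathlib

open PowerSeries Finset

/-- The power series `−log(1−X)` over `ℚ`. -/
noncomputable def L : ℚ⟦X⟧ := PowerSeries.mk fun n => if n = 0 then 0 else 1 / (n : ℚ)

lemma coeff_L (n : ℕ) : coeff (R := ℚ) n L = if n = 0 then 0 else 1 / (n : ℚ) := coeff_mk _ _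

lemma X_dvd_L : (X : ℚ⟦X⟧) ∣ L := by
  rw [PowerSeries.X_dvd_iff]; simpa using coeff_L 0

lemma coeff_L_pow_eq_zero {a m : ℕ} (h : a < m) : coeff (R := ℚ) a (L ^ m) = 0 := by
  have : (X : ℚ⟦X⟧)^m ∣ L^m := pow_dvd_pow_of_dvd X_dvd_L m
  rw [PowerSeries.X_pow_dvd_iff] at this
  exact this a h

lemma coeff_L_pow_mul_eq_zero {a m : ℕ} (φ : ℚ⟦X⟧) (h : a < m) : coeff (R := ℚ) a (L ^ m * φ) = 0 := by
  have : (X : ℚ⟦X⟧)^m ∣ L^m * φ := Dvd.dvd.mul_right (pow_dvd_pow_of_dvd X_dvd_L m) φ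
  rw [PowerSeries.X_pow_dvd_iff] at this
  exact this a h

noncomputable def dL : ℚ⟦X⟧ := d⁄dX ℚ L

lemma coeff_dL (n : ℕ) : coeff (R := ℚ) n dL = 1 := by
  rw [dL, PowerSeries.coeff_derivative, coeff_L, if_neg (Nat.succ_ne_zero n)]; push_cast; field_simp

lemma dL_eq : dL = 1 + X * dL := by
  ext n
  rw [coeff_dL, map_add]
  rcases n with _ | n
  · simp
  · simp [PowerSeries.coeff_succ_X_mul, coeff_dL, PowerSeries.coeff_one]

noncomputable def cc : ℕ → ℚ := fun m => (-1)^m / m.factorial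

noncomputable def EE : ℕ → ℚ := fun a => ∑ m ∈ range (a+1), cc m * coeff (R := ℚ) a (L^m)
noncomputable def WW : ℕ → ℚ := fun a => ∑ m ∈ range (a+1), cc m * coeff (R := ℚ) a (L^m * dL)

lemma step1 (n : ℕ) : ((n+1 : ℕ) : ℚ) * EE (n+1) = - WW n := by
  rw [EE, WW, Finset.mul_sum, ← Finset.sum_neg_distrib]
  rw [Finset.sum_range_succ']
  have h0 : ((n+1:ℕ):ℚ) * (cc 0 * coeff (R := ℚ) (n+1) (L^0)) = 0 := by
    simp [PowerSeries.coeff_one]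
  rw [h0, add_zero]
  refine Finset.sum_congr rfl fun m _ => ?_
  have hd : coeff (R := ℚ) n (d⁄dX ℚ (L^(m+1))) = coeff (R := ℚ) (n+1) (L^(m+1)) * ((n:ℚ)+1) :=
    PowerSeries.coeff_derivative _ _
  have hlb : d⁄dX ℚ (L^(m+1)) = (m+1) • (L^m * dL) := by
    rw [Derivation.leibniz_pow, Nat.succ_sub_one, smul_eq_mul, dL]
  have : coeff (R := ℚ) n (L^m * dL) * ((m:ℚ)+1) = coeff (R := ℚ) (n+1) (L^(m+1)) * ((n:ℚ)+1) := by
    rw [← hd, hlb, map_nsmul, nsmul_eq_mul]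
    push_cast
    ring
  have hcc : cc (m+1) * ((m:ℚ)+1) = - cc m := by
    simp only [cc, pow_succ, Nat.factorial_succ]
    push_cast
    have : (m.factorial : ℚ) ≠ 0 := Nat.cast_ne_zero.2 m.factorial_ne_zero
    field_simp
  calc ((n+1:ℕ):ℚ) * (cc (m+1) * coeff (R := ℚ) (n+1) (L^(m+1)))
      = cc (m+1) * (coeff (R := ℚ) (n+1) (L^(m+1)) * ((n:ℚ)+1)) := by push_cast; ring
    _ = cc (m+1) * (coeff (R := ℚ) n (L^m * dL) * ((m:ℚ)+1)) := by rw [this]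
    _ = (cc (m+1) * ((m:ℚ)+1)) * coeff (R := ℚ) n (L^m * dL) := by ring
    _ = - (cc m * coeff (R := ℚ) n (L^m * dL)) := by rw [hcc]; ring

lemma step2 (n : ℕ) : WW (n+1) = EE (n+1) + WW n := by
  rw [WW, EE, WW]
  have key : ∀ m, coeff (R := ℚ) (n+1) (L^m * dL) = coeff (R := ℚ) (n+1) (L^m) + coeff (R := ℚ) n (L^m * dL) := by
    intro m
    conv_lhs => rw [dL_eq]
    rw [mul_add, mul_one, map_add]
    congr 1
    rw [show L^m * (X * dL) = X * (L^m * dL) by ring, PowerSeries.coeff_succ_X_mul]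
  have : ∑ m ∈ range (n+2), cc m * coeff (R := ℚ) n (L^m * dL)
       = ∑ m ∈ range (n+1), cc m * coeff (R := ℚ) n (L^m * dL) := by
    rw [Finset.sum_range_succ, coeff_L_pow_mul_eq_zero _ (Nat.lt_succ_self n), mul_zero, add_zero]
  rw [← this, ← Finset.sum_add_distrib]
  refine Finset.sum_congr rfl fun m _ => ?_
  rw [key m]
  ring

lemma EE_zero : EE 0 = 1 := by
  simp [EE, cc]

lemma EE_one : EE 1 = -1 := by
  rw [EE]
  rw [show (1:ℕ)+1 = 2 from rfl, Finset.sum_range_succ, Finset.sum_range_one]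
  simp [cc, coeff_L, PowerSeries.coeff_one, pow_one]

lemma EE_rec (n : ℕ) : ((n+2 : ℕ) : ℚ) * EE (n+2) = (n : ℚ) * EE (n+1) := by
  have h1 := step1 (n+1)
  have h2 := step2 n
  have h3 := step1 n
  rw [h2] at h1
  push_cast at h1 h3 ⊢
  linarith

lemma EE_eq (n : ℕ) : EE n = if n = 0 then 1 else if n = 1 then -1 else 0 := by
  induction n using Nat.strong_induction_on with
  | _ n ih =>
    match n with
    | 0 => simpa using EE_zero
    | 1 => simpa using EE_one
    | (k+2) =>
      have hr := EE_rec k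
      have hk1 : EE (k+1) = if k+1 = 1 then -1 else 0 := by
        have := ih (k+1) (by omega)
        simpa using this
      rw [if_neg (show ¬(k+2=0) by omega), if_neg (show ¬(k+2=1) by omega)]
      rcases Nat.eq_zero_or_pos k with rfl | hk
      · have h2 : ((2:ℕ):ℚ) * EE 2 = 0 := by simpa using hr
        norm_num at h2
        simpa using h2
      · have hk1' : EE (k+1) = 0 := by rw [hk1, if_neg (by omega)]
        rw [hk1', mul_zero] at hr
        have hne : ((k+2:ℕ):ℚ) ≠ 0 := by positivity
        exact (mul_eq_zero.1 hr).resolve_left hne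

noncomputable def CL (f : ℕ → ℚ) : ℚ⟦X⟧ := PowerSeries.mk fun n => ∑ k ∈ range (n+1), f k * coeff (R := ℚ) n (L^k)

lemma comp_mul (f g : ℕ → ℚ) :
    CL f * CL g = CL (fun k => ∑ p ∈ antidiagonal k, f p.1 * g p.2) := by
  ext n
  rw [PowerSeries.coeff_mul, CL, CL, CL, coeff_mk]
  simp only [coeff_mk]
  -- extend ranges
  have hext : ∀ p ∈ antidiagonal n,
      (∑ i ∈ range (p.1+1), f i * coeff (R := ℚ) p.1 (L^i)) * (∑ j ∈ range (p.2+1), g j * coeff (R := ℚ) p.2 (L^j))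
      = ∑ i ∈ range (n+1), ∑ j ∈ range (n+1), f i * coeff (R := ℚ) p.1 (L^i) * (g j * coeff (R := ℚ) p.2 (L^j)) := by
    intro p hp
    rw [Finset.HasAntidiagonal.mem_antidiagonal] at hp
    have h1 : (∑ i ∈ range (p.1+1), f i * coeff (R := ℚ) p.1 (L^i)) = ∑ i ∈ range (n+1), f i * coeff (R := ℚ) p.1 (L^i) := by
      refine Finset.sum_subset (by gcongr <;> omega) fun i _ hi => ?_
      rw [coeff_L_pow_eq_zero (by simp at hi ⊢; omega), mul_zero]
    have h2 : (∑ j ∈ range (p.2+1), g j * coeff (R := ℚ) p.2 (L^j)) = ∑ j ∈ range (n+1), g j * coeff (R := ℚ) p.2 (L^j) := by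
      refine Finset.sum_subset (by gcongr <;> omega) fun j _ hj => ?_
      rw [coeff_L_pow_eq_zero (by simp at hj ⊢; omega), mul_zero]
    rw [h1, h2, Finset.sum_mul_sum]
  rw [Finset.sum_congr rfl hext]
  rw [Finset.sum_comm]
  have hswap : ∀ i ∈ range (n+1),
      (∑ p ∈ antidiagonal n, ∑ j ∈ range (n+1), f i * coeff (R := ℚ) p.1 (L^i) * (g j * coeff (R := ℚ) p.2 (L^j)))
      = ∑ j ∈ range (n+1), f i * g j * coeff (R := ℚ) n (L^(i+j)) := by
    intro i _
    rw [Finset.sum_comm]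
    refine Finset.sum_congr rfl fun j _ => ?_
    rw [pow_add, PowerSeries.coeff_mul, Finset.mul_sum]
    refine Finset.sum_congr rfl fun p _ => ?_
    ring
  rw [Finset.sum_congr rfl hswap]
  -- now LHS = ∑_{i,j ∈ range(n+1)} f i g j coeff n L^(i+j)
  rw [← Finset.sum_product']
  -- RHS
  have hrhs : ∀ k ∈ range (n+1),
      (∑ p ∈ antidiagonal k, f p.1 * g p.2) * coeff (R := ℚ) n (L^k)
      = ∑ p ∈ antidiagonal k, f p.1 * g p.2 * coeff (R := ℚ) n (L^(p.1+p.2)) := by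
    intro k _
    rw [Finset.sum_mul]
    refine Finset.sum_congr rfl fun p hp => ?_
    rw [Finset.HasAntidiagonal.mem_antidiagonal] at hp
    rw [hp]
  rw [Finset.sum_congr rfl hrhs]
  have hdisj : (↑(range (n+1)) : Set ℕ).PairwiseDisjoint (fun k => antidiagonal k) := by
    intro a _ b _ hab
    simp only [Finset.disjoint_left]
    intro p hpa hpb
    rw [Finset.HasAntidiagonal.mem_antidiagonal] at hpa hpb
    exact hab (hpa ▸ hpb ▸ rfl)
  rw [← Finset.sum_biUnion hdisj]
  refine (Finset.sum_subset ?_ ?_).symm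
  · intro p hp
    rw [Finset.mem_biUnion] at hp
    obtain ⟨k, hk, hpk⟩ := hp
    rw [Finset.HasAntidiagonal.mem_antidiagonal] at hpk
    simp only [Finset.mem_product, Finset.mem_range] at *
    omega
  · intro p hp hnp
    have : n < p.1 + p.2 := by
      by_contra h
      exact hnp (Finset.mem_biUnion.2 ⟨p.1+p.2, Finset.mem_range.2 (by omega), Finset.HasAntidiagonal.mem_antidiagonal.2 rfl⟩)
    rw [coeff_L_pow_eq_zero this, mul_zero]

lemma list_getD_range (xs : List ℕ) : (List.range xs.length).map (fun i => xs.getD i 0) = xs := by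
  apply List.ext_getElem
  · simp
  · intro i h1 h2
    simp [List.getD_eq_getElem?_getD, List.getElem?_eq_getElem h2]

lemma cast_list_shape (xs : List ℕ) :
    (xs.map (fun j => (1:ℚ)/(j:ℚ))).prod = (xs.map (fun j : ℕ => (1:ℚ)/((j:ℕ):ℚ))).prod := by
  induction xs with
  | nil => rfl
  | cons a t ih => simp_all

lemma coeff_L_pow (n m : ℕ) :
    coeff (R := ℚ) n (L^m) = ∑ c ∈ Finset.univ.filter (fun c : Composition n => c.length = m),
      (c.blocks.map (fun j => (1:ℚ)/(j:ℚ))).prod := by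
  classical
  simp only [cast_list_shape]
  rw [PowerSeries.coeff_pow]
  rw [← Finset.sum_filter_add_sum_filter_not _ (fun l => ∀ i ∈ range m, l i ≠ 0)]
  have h2 : ∑ l ∈ (finsuppAntidiag (range m) n).filter (fun l => ¬ ∀ i ∈ range m, l i ≠ 0),
      ∏ i ∈ range m, coeff (R := ℚ) (l i) L = 0 := by
    refine Finset.sum_eq_zero fun l hl => ?_
    rw [Finset.mem_filter] at hl
    have := hl.2
    push_neg at this
    obtain ⟨i, hi, hzero⟩ := this
    refine Finset.prod_eq_zero hi ?_
    rw [hzero, coeff_L]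
    simp
  rw [h2, add_zero]
  refine Finset.sum_bij'
    (i := fun l hl => (⟨(List.range m).map l, ?_, ?_⟩ : Composition n))
    (j := fun c hc => Finsupp.onFinset (range m) (fun i => c.blocks.getD i 0) ?_)
    ?_ ?_ ?_ ?_ ?_
  · -- blocks_pos
    intro q hq
    rw [List.mem_map] at hq
    obtain ⟨a, ha, rfl⟩ := hq
    rw [List.mem_range] at ha
    rw [Finset.mem_filter] at hl
    exact Nat.pos_of_ne_zero (hl.2 a (Finset.mem_range.2 ha))
  · -- blocks_sum
    rw [Finset.mem_filter, mem_finsuppAntidiag] at hl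
    exact hl.1.1
  · -- support subset for onFinset
    intro i hi
    rw [Finset.mem_filter] at hc
    rw [Finset.mem_range]
    by_contra hge
    have hlen : c.blocks.length = m := hc.2
    exact hi (List.getD_eq_default _ _ (by omega))
  · -- hi : image in filter-univ
    intro l hl
    rw [Finset.mem_filter]
    exact ⟨Finset.mem_univ _, by simp [Composition.length]⟩
  · -- hj : inverse image in filter set
    intro c hc
    rw [Finset.mem_filter] at hc ⊢
    constructor
    · rw [mem_finsuppAntidiag]
      constructor
      · show ∑ i ∈ range m, c.blocks.getD i 0 = n
        have hlen : c.blocks.length = m := hc.2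
        have h3 : ∑ i ∈ range m, c.blocks.getD i 0
            = ((List.range m).map (fun i => c.blocks.getD i 0)).sum := rfl
        rw [h3, ← hlen, list_getD_range]
        exact c.blocks_sum
      · exact Finsupp.support_onFinset_subset
    · intro i hi
      simp only [Finsupp.onFinset_apply]
      have hlen : c.blocks.length = m := hc.2
      rw [Finset.mem_range] at hi
      rw [List.getD_eq_getElem _ _ (by omega)]
      exact (c.blocks_pos (c.blocks.getElem_mem _)).ne'
  · -- left_inv : j (i l) = l
    intro l hl
    ext a
    simp only [Finsupp.onFinset_apply]
    by_cases ha : a < m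
    · rw [List.getD_eq_getElem _ _ (by simpa using ha)]
      simp
    · rw [List.getD_eq_default _ _ (by simpa using ha)]
      rw [Finset.mem_filter, mem_finsuppAntidiag] at hl
      by_contra hne
      have := hl.1.2 (Finsupp.mem_support_iff.2 (Ne.symm hne))
      rw [Finset.mem_range] at this
      omega
  · -- right_inv : i (j c) = c
    intro c hc
    rw [Finset.mem_filter] at hc
    apply Composition.ext
    simp only
    have hlen : c.blocks.length = m := hc.2
    calc (List.range m).map (fun i => (Finsupp.onFinset (range m) (fun i => c.blocks.getD i 0) _) i)
        = (List.range m).map (fun i => c.blocks.getD i 0) := by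
          refine List.map_congr_left fun i _ => ?_
          simp [Finsupp.onFinset_apply]
      _ = c.blocks := by rw [← hlen, list_getD_range]
  · -- values
    intro l hl
    rw [Finset.mem_filter] at hl
    show ∏ i ∈ range m, coeff (R := ℚ) (l i) L
        = (((List.range m).map (l : ℕ → ℕ)).map (fun j : ℕ => (1:ℚ)/((j:ℕ):ℚ))).prod
    have hmm : (((List.range m).map (l : ℕ → ℕ)).map (fun j : ℕ => (1:ℚ)/(j:ℚ)))
        = (List.range m).map (fun i => (1:ℚ)/((l i : ℕ) : ℚ)) := by
      simp [List.map_map, Function.comp]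
    rw [hmm]
    have h4 : ((List.range m).map (fun i => (1:ℚ)/((l i : ℕ) : ℚ))).prod
        = ∏ i ∈ range m, (1:ℚ)/((l i : ℕ) : ℚ) := rfl
    rw [h4]
    refine Finset.prod_congr rfl fun i hi => ?_
    rw [coeff_L, if_neg (hl.2 i hi)]

noncomputable def fF : ℕ → ℚ := fun k => bernoulli' k / k.factorial
noncomputable def gG : ℕ → ℚ := fun k => coeff (R := ℚ) k (1 - evalNegHom (exp ℚ))

lemma gG_eq (k : ℕ) : gG k = (if k = 0 then 1 else 0) - cc k := by
  rw [gG, map_sub, PowerSeries.coeff_one, evalNegHom, PowerSeries.coeff_rescale, coeff_exp, cc]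
  simp only [eq_ratCast, Rat.cast_div, Rat.cast_one]
  push_cast
  ring

lemma FG : bernoulli'PowerSeries ℚ * (1 - evalNegHom (exp ℚ)) = X := by
  have h1 : (exp ℚ - 1) * evalNegHom (exp ℚ) = 1 - evalNegHom (exp ℚ) := by
    rw [sub_mul, one_mul, exp_mul_exp_neg_eq_one]
  calc bernoulli'PowerSeries ℚ * (1 - evalNegHom (exp ℚ))
      = (bernoulli'PowerSeries ℚ * (exp ℚ - 1)) * evalNegHom (exp ℚ) := by rw [mul_assoc, h1]
    _ = X * (exp ℚ * evalNegHom (exp ℚ)) := by rw [bernoulli'PowerSeries_mul_exp_sub_one]; ring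
    _ = X := by rw [exp_mul_exp_neg_eq_one, mul_one]

lemma CL_gG : CL gG = X := by
  ext b
  rw [CL, coeff_mk]
  have : ∑ j ∈ range (b+1), gG j * coeff (R := ℚ) b (L^j)
      = (∑ j ∈ range (b+1), (if j = 0 then (1:ℚ) else 0) * coeff (R := ℚ) b (L^j)) - EE b := by
    rw [EE, ← Finset.sum_sub_distrib]
    refine Finset.sum_congr rfl fun j _ => ?_
    rw [gG_eq]
    ring
  rw [this]
  have h0 : ∑ j ∈ range (b+1), (if j = 0 then (1:ℚ) else 0) * coeff (R := ℚ) b (L^j)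
      = coeff (R := ℚ) b (L^0) := by
    rw [Finset.sum_eq_single 0]
    · simp
    · intro j _ hj; rw [if_neg hj, zero_mul]
    · intro h; exact absurd (Finset.mem_range.2 (Nat.succ_pos b)) h
  rw [h0, EE_eq, pow_zero, PowerSeries.coeff_one, PowerSeries.coeff_X]
  rcases b with _ | _ | b <;> norm_num

lemma CL_fF_mul_X : CL fF * X = L := by
  have hconv : CL fF * CL gG = CL (fun k => ∑ p ∈ antidiagonal k, fF p.1 * gG p.2) :=
    comp_mul fF gG
  have hcoe : (fun k => ∑ p ∈ antidiagonal k, fF p.1 * gG p.2)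
      = fun k => coeff (R := ℚ) k (X : ℚ⟦X⟧) := by
    funext k
    rw [← FG, PowerSeries.coeff_mul]
    refine Finset.sum_congr rfl fun p _ => ?_
    rw [gG, fF, bernoulli'PowerSeries, coeff_mk]
    simp
  have hCLX : CL (fun k => coeff (R := ℚ) k (X : ℚ⟦X⟧)) = L := by
    ext a
    rw [CL, coeff_mk]
    rcases Nat.eq_zero_or_pos a with rfl | ha
    · simp [PowerSeries.coeff_X, coeff_L]
    · rw [Finset.sum_eq_single 1]
      · rw [PowerSeries.coeff_X, if_pos rfl, pow_one, one_mul]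
      · intro j _ hj; rw [PowerSeries.coeff_X, if_neg hj, zero_mul]
      · intro h; exact absurd (Finset.mem_range.2 (by omega)) h
  rw [← CL_gG, hconv, hcoe, hCLX]

lemma coeff_CL_fF (n : ℕ) : coeff (R := ℚ) n (CL fF) = 1 / ((n : ℚ) + 1) := by
  have := congrArg (coeff (R := ℚ) (n+1)) CL_fF_mul_X
  rw [PowerSeries.coeff_succ_mul_X, coeff_L, if_neg (Nat.succ_ne_zero n)] at this
  rw [this]
  push_cast
  ring

/-- For every `n ≥ 1`:
`∑_{m=1}^{n} ((−1)^m · B_m / m!) · ∑_{(c₁,…,c_m)} ∏_j (1/c_j) = 1/(n+1)`, the inner sum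
being over all compositions `(c₁, …, c_m)` of `n` of length `m`, where `B_m` is the `m`-th
Bernoulli number with the convention `B₁ = −1/2` (Mathlib's `bernoulli`). -/
theorem composition_bernoulli_sum (n : ℕ) (hn : 1 ≤ n) :
    ∑ m ∈ Finset.Icc 1 n, ((-1 : ℚ) ^ m * bernoulli m / (Nat.factorial m : ℚ)) *
      ∑ c ∈ Finset.univ.filter (fun c : Composition n => c.length = m),
        (c.blocks.map (fun j => (1 : ℚ) / (j : ℚ))).prod = 1 / (n + 1 : ℚ) := by
  have hb : ∀ m : ℕ, (-1 : ℚ)^m * bernoulli m = bernoulli' m := by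
    intro m
    rw [bernoulli'_eq_bernoulli]
  have hstep : ∑ m ∈ Finset.Icc 1 n, ((-1 : ℚ) ^ m * bernoulli m / (Nat.factorial m : ℚ)) *
      ∑ c ∈ Finset.univ.filter (fun c : Composition n => c.length = m),
        (c.blocks.map (fun j => (1 : ℚ) / (j : ℚ))).prod
      = ∑ m ∈ Finset.Icc 1 n, fF m * coeff (R := ℚ) n (L^m) := by
    refine Finset.sum_congr rfl fun m _ => ?_
    rw [← coeff_L_pow, fF, ← hb m]
  rw [hstep]
  have hins : Finset.range (n+1) = insert 0 (Finset.Icc 1 n) := by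
    ext a
    simp [Finset.mem_range, Finset.mem_Icc]
    omega
  have h0 : fF 0 * coeff (R := ℚ) n (L^0) = 0 := by
    rw [pow_zero, PowerSeries.coeff_one, if_neg (by omega), mul_zero]
  have : ∑ m ∈ Finset.Icc 1 n, fF m * coeff (R := ℚ) n (L^m)
      = ∑ m ∈ Finset.range (n+1), fF m * coeff (R := ℚ) n (L^m) := by
    rw [hins, Finset.sum_insert (by simp), h0, zero_add]
  have hCL : coeff (R := ℚ) n (CL fF) = ∑ m ∈ Finset.range (n+1), fF m * coeff (R := ℚ) n (L^m) := coeff_mk _ _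
  rw [this, ← hCL, coeff_CL_fF]
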